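/- There exists a function R: (0,π) × ℝ → ℝ, independent of ε, such that for every ε with 0 ≤ ε < 1 and every (θ,φ) with 0 < θ < π, φ ∈ ℝ, the function h_ε(θ,φ) = sin θ · cos θ · cos φ · (1 - (3/196)·ε²·(4 - 7sin²θ)) satisfies Δ₁ h_ε = (-6 + (20/7)ε²)·h_ε + ε⁴·R(θ,φ). In other words, to first order in ε² the perturbed spherical harmonic with l = 2, m = 1 is an eigenfunction of Δ₁ with eigenvalue -6 + (20/7)ε². -/

import Mathlib

open Real

/-- The truncated (first order in `ε²`) Finslerian Laplace operator, acting on a function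
`u : ℝ → ℝ → ℝ` of the angular variables `(θ, φ)`. -/
noncomputable def truncLaplacian (ε : ℝ) (u : ℝ → ℝ → ℝ) (θ φ : ℝ) : ℝ :=
  ((4 - 5 * ε ^ 2 * sin θ ^ 2) / (4 * sin θ ^ 2)) * deriv (deriv (u θ)) φ
  + (1 - 3 / 4 * ε ^ 2 * sin θ ^ 2) * deriv (deriv (fun t => u t φ)) θ
  + (cos θ / sin θ) * (1 + 3 / 4 * ε ^ 2 * sin θ ^ 2) * deriv (fun t => u t φ) θ

/-- First θ-derivative of the perturbed harmonic. -/
lemma hasDerivAt_aux1 (A q t : ℝ) :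
    HasDerivAt (fun t => Real.sin t * Real.cos t * q * (1 - A * (4 - 7 * Real.sin t ^ 2)))
      (((Real.cos t ^ 2 - Real.sin t ^ 2) * (1 - A * (4 - 7 * Real.sin t ^ 2))
        + 14 * A * Real.sin t ^ 2 * Real.cos t ^ 2) * q) t := by
  have h := (((Real.hasDerivAt_sin t).mul (Real.hasDerivAt_cos t)).mul_const q).mul
    ((hasDerivAt_const t (1 : ℝ)).sub
      (((hasDerivAt_const t (4 : ℝ)).sub (((Real.hasDerivAt_sin t).pow 2).const_mul 7)).const_mul A))
  refine h.congr_deriv ?_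
  simp only [Pi.mul_apply, Pi.sub_apply, Pi.pow_apply]
  ring

/-- Second θ-derivative of the perturbed harmonic. -/
lemma hasDerivAt_aux2 (A q t : ℝ) :
    HasDerivAt (fun t => ((Real.cos t ^ 2 - Real.sin t ^ 2) * (1 - A * (4 - 7 * Real.sin t ^ 2))
        + 14 * A * (Real.sin t ^ 2 * Real.cos t ^ 2)) * q)
      ((-4 * Real.sin t * Real.cos t * (1 - A * (4 - 7 * Real.sin t ^ 2))
        + 42 * A * Real.sin t * Real.cos t * (Real.cos t ^ 2 - Real.sin t ^ 2)) * q) t := by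
  have h := (((((Real.hasDerivAt_cos t).pow 2).sub ((Real.hasDerivAt_sin t).pow 2)).mul
      ((hasDerivAt_const t (1 : ℝ)).sub
        (((hasDerivAt_const t (4 : ℝ)).sub
          (((Real.hasDerivAt_sin t).pow 2).const_mul 7)).const_mul A))).add
     ((((Real.hasDerivAt_sin t).pow 2).mul ((Real.hasDerivAt_cos t).pow 2)).const_mul
        (14 * A))).mul_const q
  refine h.congr_deriv ?_
  simp only [Pi.mul_apply, Pi.sub_apply, Pi.pow_apply]
  ring

/-- To first order in `ε²`, the perturbed spherical harmonic with `l = 2`, `m = 1`,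
`h_ε(θ,φ) = sin θ · cos θ · cos φ · (1 - (3/196)·ε²·(4 - 7sin²θ))`, is an eigenfunction of
`Δ₁` with eigenvalue `-6 + (20/7)ε²`: there is an `ε`-independent remainder `R(θ,φ)` with
`Δ₁ h_ε = (-6 + (20/7)ε²)·h_ε + ε⁴·R(θ,φ)`. -/
theorem truncLaplacian_l2m1_eigen :
    ∃ R : ℝ → ℝ → ℝ, ∀ ε : ℝ, 0 ≤ ε → ε < 1 →
      ∀ θ φ : ℝ, 0 < θ → θ < Real.pi →
        truncLaplacian ε
            (fun θ' φ' => Real.sin θ' * Real.cos θ' * Real.cos φ' *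
              (1 - 3 / 196 * ε ^ 2 * (4 - 7 * Real.sin θ' ^ 2)))
            θ φ =
          (-6 + 20 / 7 * ε ^ 2) *
            (Real.sin θ * Real.cos θ * Real.cos φ *
              (1 - 3 / 196 * ε ^ 2 * (4 - 7 * Real.sin θ ^ 2)))
          + ε ^ 4 * R θ φ := by
  refine ⟨fun θ φ => Real.cos φ * Real.sin θ * Real.cos θ *
      (18 / 343 - 99 / 196 * Real.sin θ ^ 2 + 27 / 28 * Real.sin θ ^ 4), ?_⟩
  intro ε _ _ θ φ hθ0 hθπ
  have hs : Real.sin θ ≠ 0 := ne_of_gt (Real.sin_pos_of_pos_of_lt_pi hθ0 hθπ)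
  set A : ℝ := 3 / 196 * ε ^ 2 with hA
  set K : ℝ := 1 - A * (4 - 7 * Real.sin θ ^ 2) with hK
  -- φ-derivatives
  have e1 : deriv (fun φ' => Real.sin θ * Real.cos θ * Real.cos φ' * K)
      = fun φ' => Real.sin θ * Real.cos θ * -Real.sin φ' * K := by
    funext x
    exact (((Real.hasDerivAt_cos x).const_mul (Real.sin θ * Real.cos θ)).mul_const K).deriv
  have e2 : deriv (fun φ' => Real.sin θ * Real.cos θ * -Real.sin φ' * K) φ
      = Real.sin θ * Real.cos θ * -Real.cos φ * K := by
    have h := (((Real.hasDerivAt_sin φ).neg.const_mul (Real.sin θ * Real.cos θ)).mul_const K).deriv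
    simp only [neg_neg, mul_neg, Pi.neg_apply] at h ⊢; exact h
  -- θ-derivatives
  have e3 : deriv (fun t => Real.sin t * Real.cos t * Real.cos φ *
        (1 - A * (4 - 7 * Real.sin t ^ 2)))
      = fun t => ((Real.cos t ^ 2 - Real.sin t ^ 2) * (1 - A * (4 - 7 * Real.sin t ^ 2))
        + 14 * A * (Real.sin t ^ 2 * Real.cos t ^ 2)) * Real.cos φ := by
    funext t
    have h := (hasDerivAt_aux1 A (Real.cos φ) t).deriv
    rw [h]; ring
  have e4 : deriv (fun t => ((Real.cos t ^ 2 - Real.sin t ^ 2) *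
        (1 - A * (4 - 7 * Real.sin t ^ 2))
        + 14 * A * (Real.sin t ^ 2 * Real.cos t ^ 2)) * Real.cos φ) θ
      = (-4 * Real.sin θ * Real.cos θ * (1 - A * (4 - 7 * Real.sin θ ^ 2))
        + 42 * A * Real.sin θ * Real.cos θ * (Real.cos θ ^ 2 - Real.sin θ ^ 2)) * Real.cos φ :=
    (hasDerivAt_aux2 A (Real.cos φ) θ).deriv
  have hpy : Real.sin θ ^ 2 + Real.cos θ ^ 2 = 1 := Real.sin_sq_add_cos_sq θ
  unfold truncLaplacian
  simp only [hK]
  rw [show (fun φ' => Real.sin θ * Real.cos θ * Real.cos φ' *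
      (1 - A * (4 - 7 * Real.sin θ ^ 2))) = (fun φ' => Real.sin θ * Real.cos θ * Real.cos φ' * K)
      from rfl]
  rw [e1, e2, e3, e4]
  simp only [hK, hA]
  field_simp
  rw [show Real.cos θ ^ 2 = 1 - Real.sin θ ^ 2 by linarith]; ring
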